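/- arXiv:2212.13381 — 2 statements merged into one kernel-verified Lean document; each statement's English description precedes it below -/
import Mathlib

section
/- Let K ≥ 1, let f : ℝ^d → ℝ^C and h : ℝ^C → ℝ be K-times continuously differentiable, let (x_1,y_1),…,(x_n,y_n) ∈ ℝ^d × ℝ^C, and let α, β > 0. Then there exist functions ψ_{i,x'} : (0,1] → ℝ^C and ψ̂_{i,x'} : (0,1] → ℝ, indexed by i ∈ {1,…,n} and x' ∈ {x_1,…,x_n}, each tending to 0 as its argument tends to 0, such that the Mixup loss L^mix_n = (1/n²) Σ_{i,j=1}^n E_{λ∼Beta(α,β)} ℓ(λx_i+(1−λ)x_j, λy_i+(1−λ)y_j) satisfies L^mix_n = (1/n) Σ_{i=1}^n ℓ(x_i,y_i) + (1/n) Σ_{i=1}^n E_{λ∼D_λ} E_{x'∼D_X} [ Σ_{k=1}^K (a_λ^k / k!) D^k h(f(x_i))[Δ_i, …, Δ_i] − a_λ · y_iᵀ Δ_i + a_λ^K ψ̂_{i,x'}(a_λ) ], where a_λ = 1−λ and Δ_i = Σ_{k=1}^K (a_λ^{k−1} / k!) D^k f(x_i)[(x'−x_i), …, (x'−x_i)]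 + a_λ^{K−1} ψ_{i,x'}(a_λ). -/
open MeasureTheory
open scoped BigOperators

open Asymptotics Filter

set_option maxHeartbeats 1000000 in
theorem taylor_peano {E : Type} [NormedAddCommGroup E] [NormedSpace ℝ E] :
    ∀ (K : ℕ) {F : Type} [NormedAddCommGroup F] [NormedSpace ℝ F] [CompleteSpace F]
      (f : E → F) (z : E),
      ContDiff ℝ K f →
      (fun u => f (z + u) - ∑ k ∈ Finset.range (K + 1),
          ((k.factorial : ℝ))⁻¹ • iteratedFDeriv ℝ k f z (fun _ => u))
        =o[nhds (0 : E)] fun u => ‖u‖ ^ K := by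
  intro K
  induction K with
  | zero =>
      intro F _ _ _ f z hf
      simp only [Finset.range_one, Finset.sum_singleton, Nat.factorial_zero, Nat.cast_one,
        inv_one, one_smul, iteratedFDeriv_zero_apply, pow_zero]
      rw [isLittleO_one_iff]
      have : Filter.Tendsto (fun u : E => f (z + u)) (nhds 0) (nhds (f z)) := by
        have h1 : Filter.Tendsto (fun u : E => z + u) (nhds 0) (nhds z) := by
          simpa using (tendsto_const_nhds.add tendsto_id :
            Filter.Tendsto (fun u : E => z + u) (nhds 0) (nhds (z + 0)))
        exact (hf.continuous.tendsto z).comp h1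
      simpa using this.sub_const (f z)
  | succ K ih =>
      intro F _ _ _ f z hf
      have hg : ContDiff ℝ K (fderiv ℝ f) := hf.fderiv_right (by exact_mod_cast le_rfl)
      set g : E → (E →L[ℝ] F) := fderiv ℝ f with hg_def
      set ρ : E → (E →L[ℝ] F) := fun w => g (z + w) - ∑ j ∈ Finset.range (K + 1),
          ((j.factorial : ℝ))⁻¹ • iteratedFDeriv ℝ j g z (fun _ => w) with hρ_def
      have hρ : ρ =o[nhds (0 : E)] fun w => ‖w‖ ^ K := ih g z hg
      have hρc : Continuous ρ := by
        apply Continuous.sub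
        · exact hg.continuous.comp (continuous_const.add continuous_id)
        · apply continuous_finset_sum
          intro j _
          exact ((iteratedFDeriv ℝ j g z).coe_continuous.comp
            (continuous_pi fun _ => continuous_id)).const_smul ((j.factorial : ℝ))⁻¹
      have hfd : Differentiable ℝ f := hf.differentiable (by simp)
      -- FTC along the segment
      have ftc : ∀ u : E, f (z + u) - f z = ∫ t in (0:ℝ)..1, (g (z + t • u)) u := by
        intro u
        have hderiv : ∀ t ∈ Set.uIcc (0:ℝ) 1,
            HasDerivAt (fun s : ℝ => f (z + s • u)) ((g (z + t • u)) u) t := by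
          intro t _
          have h1 : HasDerivAt (fun s : ℝ => z + s • u) u t := by
            simpa using ((hasDerivAt_id t).smul_const u).const_add z
          have h2 := (hfd (z + t • u)).hasFDerivAt
          exact h2.comp_hasDerivAt t h1
        have hcont : Continuous (fun t : ℝ => (g (z + t • u)) u) :=
          (ContinuousLinearMap.apply ℝ F u).continuous.comp
            (hg.continuous.comp (continuous_const.add (continuous_id.smul continuous_const)))
        have := intervalIntegral.integral_eq_sub_of_hasDerivAt hderiv
          (hcont.intervalIntegrable 0 1)
        rw [this]
        simp
      -- identify the diagonal coefficients
      have cj : ∀ (j : ℕ) (u : E),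
          (iteratedFDeriv ℝ j g z fun _ => u) u = iteratedFDeriv ℝ (j+1) f z (fun _ => u) := by
        intro j u
        rw [iteratedFDeriv_succ_apply_right]
        rfl
      -- pointwise integrand decomposition
      have integrand_eq : ∀ (u : E) (t : ℝ), (g (z + t • u)) u =
          (∑ j ∈ Finset.range (K + 1),
            (t ^ j * ((j.factorial : ℝ))⁻¹) • ((iteratedFDeriv ℝ j g z fun _ => u) u))
          + (ρ (t • u)) u := by
        intro u t
        have e0 : ρ (t • u) = g (z + t • u) - ∑ j ∈ Finset.range (K + 1),
            ((j.factorial : ℝ))⁻¹ • iteratedFDeriv ℝ j g z (fun _ => t • u) := rfl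
        have e1 : g (z + t • u) = (∑ j ∈ Finset.range (K + 1),
            ((j.factorial : ℝ))⁻¹ • iteratedFDeriv ℝ j g z (fun _ => t • u)) + ρ (t • u) := by
          rw [e0]; abel
        rw [e1, ContinuousLinearMap.add_apply, ContinuousLinearMap.sum_apply]
        congr 1
        refine Finset.sum_congr rfl fun j _ => ?_
        have e2 : iteratedFDeriv ℝ j g z (fun _ => t • u)
            = t ^ j • iteratedFDeriv ℝ j g z (fun _ => u) := by
          have := (iteratedFDeriv ℝ j g z).map_smul_univ (fun _ => t) (fun _ => u)
          simpa using this
        rw [e2, ContinuousLinearMap.smul_apply, ContinuousLinearMap.smul_apply,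
          smul_smul, mul_comm]
      -- the integral of the polynomial part
      have int_eq : ∀ u : E, ∫ t in (0:ℝ)..1, (g (z + t • u)) u =
          (∑ j ∈ Finset.range (K + 1),
            (((j+1).factorial : ℝ))⁻¹ • iteratedFDeriv ℝ (j+1) f z (fun _ => u))
          + ∫ t in (0:ℝ)..1, (ρ (t • u)) u := by
        intro u
        rw [intervalIntegral.integral_congr (fun t _ => integrand_eq u t)]
        have hint2 : IntervalIntegrable (fun t : ℝ => (ρ (t • u)) u) MeasureTheory.volume 0 1 := by
          exact ((ContinuousLinearMap.apply ℝ F u).continuous.comp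
            (hρc.comp (continuous_id.smul continuous_const))).intervalIntegrable 0 1
        have hint1 : IntervalIntegrable (fun t : ℝ => ∑ j ∈ Finset.range (K + 1),
            (t ^ j * ((j.factorial : ℝ))⁻¹) • ((iteratedFDeriv ℝ j g z fun _ => u) u))
            MeasureTheory.volume 0 1 := by
          apply Continuous.intervalIntegrable
          exact continuous_finset_sum _ fun j _ =>
            ((continuous_pow j).mul continuous_const).smul continuous_const
        rw [intervalIntegral.integral_add hint1 hint2]
        congr 1
        rw [intervalIntegral.integral_finset_sum]
        · refine Finset.sum_congr rfl fun j _ => ?_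
          rw [intervalIntegral.integral_smul_const, intervalIntegral.integral_mul_const,
            integral_pow, cj]
          norm_num [Nat.factorial_succ, mul_inv]
          rw [mul_comm]
        · intro j _
          exact (((continuous_pow j).mul continuous_const).smul
            (continuous_const : Continuous fun _ : ℝ => ((iteratedFDeriv ℝ j g z) fun _ => u) u)).intervalIntegrable 0 1
      -- the key identity
      have key : ∀ u : E, f (z + u) - ∑ k ∈ Finset.range (K + 1 + 1),
          ((k.factorial : ℝ))⁻¹ • iteratedFDeriv ℝ k f z (fun _ => u)
          = ∫ t in (0:ℝ)..1, (ρ (t • u)) u := by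
        intro u
        have reindex : ∑ k ∈ Finset.range (K + 1 + 1),
            ((k.factorial : ℝ))⁻¹ • iteratedFDeriv ℝ k f z (fun _ => u)
            = f z + ∑ j ∈ Finset.range (K + 1),
              (((j+1).factorial : ℝ))⁻¹ • iteratedFDeriv ℝ (j+1) f z (fun _ => u) := by
          rw [Finset.sum_range_succ']
          simp [iteratedFDeriv_zero_apply, add_comm]
        rw [reindex]
        have h5 := ftc u
        rw [int_eq u] at h5
        have goal1 : f (z + u) - (f z + ∑ j ∈ Finset.range (K + 1),
              (((j+1).factorial : ℝ))⁻¹ • iteratedFDeriv ℝ (j+1) f z (fun _ => u))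
            = (f (z + u) - f z) - ∑ j ∈ Finset.range (K + 1),
              (((j+1).factorial : ℝ))⁻¹ • iteratedFDeriv ℝ (j+1) f z (fun _ => u) := by abel
        rw [goal1, h5]
        abel
      -- the little-o estimate
      have lo : (fun u : E => ∫ t in (0:ℝ)..1, (ρ (t • u)) u)
          =o[nhds (0 : E)] fun u => ‖u‖ ^ (K + 1) := by
        rw [isLittleO_iff]
        intro c hc
        have h1 := hρ.def hc
        rw [Metric.eventually_nhds_iff] at h1 ⊢
        obtain ⟨δ, hδ, hδ'⟩ := h1
        refine ⟨δ, hδ, fun u hu => ?_⟩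
        rw [dist_zero_right] at hu
        have hb : ∀ t ∈ Set.uIoc (0:ℝ) 1, ‖(ρ (t • u)) u‖ ≤ c * ‖u‖ ^ (K + 1) := by
          intro t ht
          rw [Set.uIoc_of_le zero_le_one] at ht
          have ht0 : (0:ℝ) ≤ t := le_of_lt ht.1
          have ht1 : t ≤ 1 := ht.2
          have h2 : ‖t • u‖ ≤ ‖u‖ := by
            rw [norm_smul, Real.norm_eq_abs, abs_of_nonneg ht0]
            nlinarith [norm_nonneg u]
          have h3 : dist (t • u) 0 < δ := by
            rw [dist_zero_right]; exact lt_of_le_of_lt h2 hu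
          have h4 := hδ' h3
          simp only [Real.norm_eq_abs, abs_of_nonneg (pow_nonneg (norm_nonneg _) K)] at h4
          calc ‖(ρ (t • u)) u‖ ≤ ‖ρ (t • u)‖ * ‖u‖ := ContinuousLinearMap.le_opNorm _ _
            _ ≤ (c * ‖t • u‖ ^ K) * ‖u‖ := by
                apply mul_le_mul_of_nonneg_right h4 (norm_nonneg u)
            _ ≤ c * ‖u‖ ^ (K + 1) := by
                rw [pow_succ, ← mul_assoc]
                apply mul_le_mul_of_nonneg_right _ (norm_nonneg u)
                exact mul_le_mul_of_nonneg_left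
                  (pow_le_pow_left₀ (norm_nonneg _) h2 K) (le_of_lt hc)
        have h6 := intervalIntegral.norm_integral_le_of_norm_le_const hb
        rw [Real.norm_eq_abs, abs_of_nonneg (pow_nonneg (norm_nonneg _) (K+1))]
        simpa using h6
      exact lo.congr' (Filter.Eventually.of_forall fun u => (key u).symm) (by rfl)


/-- The Beta function B(a,b) = Γ(a)Γ(b)/Γ(a+b). -/
noncomputable def betaFun (a b : ℝ) : ℝ := Real.Gamma a * Real.Gamma b / Real.Gamma (a + b)

/-- The Beta(a,b) density l ↦ l^(a−1) (1−l)^(b−1) / B(a,b). -/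
noncomputable def betaDensity (a b l : ℝ) : ℝ :=
  l ^ (a - 1) * (1 - l) ^ (b - 1) / betaFun a b

/-- The Beta(a,b) probability measure on [0,1]. -/
noncomputable def betaMeasure (a b : ℝ) : Measure ℝ :=
  (volume.restrict (Set.Icc (0 : ℝ) 1)).withDensity fun l => ENNReal.ofReal (betaDensity a b l)

/-- The mixture D_λ = (a/(a+b))·Beta(a+1,b) + (b/(a+b))·Beta(b+1,a). -/
noncomputable def mixMeasure (a b : ℝ) : Measure ℝ :=
  ENNReal.ofReal (a / (a + b)) • betaMeasure (a + 1) b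
    + ENNReal.ofReal (b / (a + b)) • betaMeasure (b + 1) a

section Beta
variable {a b : ℝ}

lemma betaFun_pos (ha : 0 < a) (hb : 0 < b) : 0 < betaFun a b := by
  unfold betaFun
  have := Real.Gamma_pos_of_pos ha
  have := Real.Gamma_pos_of_pos hb
  have := Real.Gamma_pos_of_pos (by linarith : (0:ℝ) < a + b)
  positivity

lemma real_betaIntegral (ha : 0 < a) (hb : 0 < b) :
    ∫ l in (0:ℝ)..(1:ℝ), l ^ (a - 1) * (1 - l) ^ (b - 1) = betaFun a b := by
  have hc := Complex.Gamma_mul_Gamma_eq_betaIntegral (s := (a:ℂ)) (t := (b:ℂ))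
    (by simpa using ha) (by simpa using hb)
  have heq : Complex.betaIntegral a b
      = ((∫ l in (0:ℝ)..(1:ℝ), l ^ (a-1) * (1 - l) ^ (b-1) : ℝ) : ℂ) := by
    rw [Complex.betaIntegral, ← intervalIntegral.integral_ofReal]
    apply intervalIntegral.integral_congr
    intro x hx
    rw [Set.uIcc_of_le zero_le_one] at hx
    show ((x:ℂ)) ^ ((a:ℂ) - 1) * (1 - (x:ℂ)) ^ ((b:ℂ) - 1) = ((x ^ (a-1) * (1 - x) ^ (b-1) : ℝ) : ℂ)
    rw [Complex.ofReal_mul, Complex.ofReal_cpow hx.1, Complex.ofReal_cpow (by linarith [hx.2] : (0:ℝ) ≤ 1 - x)]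
    push_cast
    ring
  rw [heq, show ((a:ℂ) + (b:ℂ)) = ((a+b : ℝ) : ℂ) by push_cast; ring] at hc
  rw [Complex.Gamma_ofReal, Complex.Gamma_ofReal, Complex.Gamma_ofReal] at hc
  have hc' : Real.Gamma a * Real.Gamma b
      = Real.Gamma (a+b) * ∫ l in (0:ℝ)..(1:ℝ), l ^ (a-1) * (1 - l) ^ (b-1) := by
    exact_mod_cast hc
  have hG : Real.Gamma (a+b) ≠ 0 := (Real.Gamma_pos_of_pos (by linarith)).ne'
  unfold betaFun
  field_simp
  linarith [hc']

lemma integrableOn_beta_integrand (ha : 0 < a) (hb : 0 < b) :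
    IntegrableOn (fun l : ℝ => l ^ (a - 1) * (1 - l) ^ (b - 1)) (Set.Icc 0 1) volume := by
  rw [integrableOn_Icc_iff_integrableOn_Ioc]
  have hcv := (Complex.betaIntegral_convergent (u := (a:ℂ)) (v := (b:ℂ))
    (by simpa using ha) (by simpa using hb))
  rw [intervalIntegrable_iff_integrableOn_Ioc_of_le zero_le_one] at hcv
  have := hcv.re
  apply IntegrableOn.congr_fun this ?_ measurableSet_Ioc
  intro x hx
  have hx0 : (0:ℝ) ≤ x := le_of_lt hx.1
  have hx1 : (0:ℝ) ≤ 1 - x := by linarith [hx.2]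
  show (((x:ℂ) ^ ((a:ℂ)-1) * (1-(x:ℂ)) ^ ((b:ℂ)-1)).re) = x ^ (a - 1) * (1 - x) ^ (b - 1)
  rw [show ((a:ℂ)-1) = ((a-1 : ℝ) : ℂ) by push_cast; ring,
      show ((b:ℂ)-1) = ((b-1 : ℝ) : ℂ) by push_cast; ring,
      show (1-(x:ℂ)) = ((1 - x : ℝ) : ℂ) by push_cast; ring,
      ← Complex.ofReal_cpow hx0, ← Complex.ofReal_cpow hx1]
  rw [← Complex.ofReal_mul]
  exact Complex.ofReal_re _

lemma measurable_rpow_const (c : ℝ) : Measurable fun x : ℝ => x ^ c := by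
  apply measurable_of_continuousOn_compl_singleton (0:ℝ)
  intro x hx
  exact (Real.continuousAt_rpow_const x c (Or.inl hx)).continuousWithinAt

lemma measurable_betaDensity : Measurable (betaDensity a b) := by
  unfold betaDensity
  exact ((measurable_rpow_const _).mul
    ((measurable_rpow_const _).comp (measurable_const.sub measurable_id))).div_const _

lemma betaDensity_nonneg (ha : 0 < a) (hb : 0 < b) {l : ℝ} (hl : l ∈ Set.Icc (0:ℝ) 1) :
    0 ≤ betaDensity a b l := by
  unfold betaDensity
  have h1 : (0:ℝ) ≤ l ^ (a - 1) := Real.rpow_nonneg hl.1 _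
  have h2 : (0:ℝ) ≤ (1 - l) ^ (b - 1) := Real.rpow_nonneg (by linarith [hl.2]) _
  have := betaFun_pos ha hb
  positivity

lemma integrableOn_betaDensity_mul (ha : 0 < a) (hb : 0 < b) {G : ℝ → ℝ} (hG : Continuous G) :
    IntegrableOn (fun l => betaDensity a b l * G l) (Set.Icc 0 1) volume := by
  obtain ⟨M, hM⟩ := (isCompact_Icc (a := (0:ℝ)) (b := 1)).exists_bound_of_continuousOn
    hG.continuousOn
  have hM0 : 0 ≤ M := le_trans (norm_nonneg _) (hM 0 (by norm_num))
  have hdom : IntegrableOn (fun l : ℝ => (l ^ (a - 1) * (1 - l) ^ (b - 1)) *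
      ((betaFun a b)⁻¹ * M)) (Set.Icc 0 1) volume :=
    (integrableOn_beta_integrand ha hb).mul_const _
  apply Integrable.mono hdom
  · exact ((measurable_betaDensity.mul hG.measurable).aestronglyMeasurable)
  · rw [ae_restrict_iff' measurableSet_Icc]
    filter_upwards with l hl
    have h1 : (0:ℝ) ≤ l ^ (a - 1) := Real.rpow_nonneg hl.1 _
    have h2 : (0:ℝ) ≤ (1 - l) ^ (b - 1) := Real.rpow_nonneg (by linarith [hl.2]) _
    have hB := betaFun_pos ha hb
    have hGl := hM l hl
    rw [Real.norm_eq_abs, Real.norm_eq_abs, abs_mul]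
    rw [abs_of_nonneg (betaDensity_nonneg ha hb hl)]
    rw [abs_of_nonneg (by positivity : (0:ℝ) ≤ (l ^ (a - 1) * (1 - l) ^ (b - 1)) * ((betaFun a b)⁻¹ * M))]
    unfold betaDensity
    rw [div_eq_mul_inv]
    rw [Real.norm_eq_abs] at hGl
    calc l ^ (a - 1) * (1 - l) ^ (b - 1) * (betaFun a b)⁻¹ * |G l|
        ≤ l ^ (a - 1) * (1 - l) ^ (b - 1) * (betaFun a b)⁻¹ * M := by
          apply mul_le_mul_of_nonneg_left hGl (by positivity)
      _ = l ^ (a - 1) * (1 - l) ^ (b - 1) * ((betaFun a b)⁻¹ * M) := by ring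

lemma integrableOn_betaDensity (ha : 0 < a) (hb : 0 < b) :
    IntegrableOn (betaDensity a b) (Set.Icc 0 1) volume := by
  have := integrableOn_betaDensity_mul ha hb (continuous_const : Continuous fun _ : ℝ => (1:ℝ))
  simpa using this

lemma betaMeasure_univ (ha : 0 < a) (hb : 0 < b) : betaMeasure a b Set.univ = 1 := by
  rw [betaMeasure, withDensity_apply _ MeasurableSet.univ, Measure.restrict_univ]
  rw [← ofReal_integral_eq_lintegral_ofReal (integrableOn_betaDensity ha hb)]
  · have : ∫ l in Set.Icc (0:ℝ) 1, betaDensity a b l ∂volume = 1 := by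
      have h1 : ∫ l in Set.Icc (0:ℝ) 1, betaDensity a b l ∂volume
          = (∫ l in Set.Icc (0:ℝ) 1, l ^ (a - 1) * (1 - l) ^ (b - 1) ∂volume) / betaFun a b := by
        unfold betaDensity
        rw [integral_div]
      rw [h1, integral_Icc_eq_integral_Ioc, ← intervalIntegral.integral_of_le zero_le_one,
        real_betaIntegral ha hb, div_self (betaFun_pos ha hb).ne']
    rw [this, ENNReal.ofReal_one]
  · rw [Filter.EventuallyLE, ae_restrict_iff' measurableSet_Icc]
    filter_upwards with l hl
    exact betaDensity_nonneg ha hb hl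

lemma isProbability_betaMeasure (ha : 0 < a) (hb : 0 < b) :
    IsProbabilityMeasure (betaMeasure a b) := ⟨betaMeasure_univ ha hb⟩

lemma integral_betaMeasure (ha : 0 < a) (hb : 0 < b) {G : ℝ → ℝ} (hG : Continuous G) :
    ∫ l, G l ∂betaMeasure a b = ∫ l in Set.Icc (0:ℝ) 1, betaDensity a b l * G l ∂volume := by
  rw [betaMeasure]
  have hmeas : Measurable fun l => (betaDensity a b l).toNNReal :=
    measurable_betaDensity.real_toNNReal
  have he : (fun l => ENNReal.ofReal (betaDensity a b l))
      = fun l => ((betaDensity a b l).toNNReal : ENNReal) := rfl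
  rw [he, integral_withDensity_eq_integral_smul hmeas]
  apply setIntegral_congr_fun measurableSet_Icc
  intro l hl
  show (betaDensity a b l).toNNReal • G l = betaDensity a b l * G l
  rw [NNReal.smul_def, Real.coe_toNNReal _ (betaDensity_nonneg ha hb hl), smul_eq_mul]

lemma integrable_betaMeasure (ha : 0 < a) (hb : 0 < b) {G : ℝ → ℝ} (hG : Continuous G) :
    Integrable G (betaMeasure a b) := by
  rw [betaMeasure, integrable_withDensity_iff
    (measurable_betaDensity.ennreal_ofReal) (Filter.Eventually.of_forall fun _ => ENNReal.ofReal_lt_top)]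
  apply IntegrableOn.congr_fun (integrableOn_betaDensity_mul ha hb hG) ?_ measurableSet_Icc
  intro l hl
  show betaDensity a b l * G l = G l * (ENNReal.ofReal (betaDensity a b l)).toReal
  rw [ENNReal.toReal_ofReal (betaDensity_nonneg ha hb hl), mul_comm]

lemma rpow_succ_self {l : ℝ} (hl : 0 ≤ l) {c : ℝ} (hc : 0 < c) :
    l ^ c = l * l ^ (c - 1) := by
  rcases eq_or_lt_of_le hl with h | h
  · rw [← h, Real.zero_rpow hc.ne', zero_mul]
  · rw [mul_comm, ← Real.rpow_add_one h.ne' (c - 1), sub_add_cancel]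

end Beta

section Mix
variable {α β : ℝ}

lemma mixMeasure_univ (hα : 0 < α) (hβ : 0 < β) : mixMeasure α β Set.univ = 1 := by
  rw [mixMeasure, Measure.add_apply, Measure.smul_apply, Measure.smul_apply,
    betaMeasure_univ (by linarith) hβ, betaMeasure_univ (by linarith) hα,
    smul_eq_mul, smul_eq_mul, mul_one, mul_one,
    ← ENNReal.ofReal_add (by positivity) (by positivity)]
  rw [← add_div, div_self (by linarith : α + β ≠ 0), ENNReal.ofReal_one]

lemma integrable_mixMeasure (hα : 0 < α) (hβ : 0 < β) {G : ℝ → ℝ} (hG : Continuous G) :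
    Integrable G (mixMeasure α β) := by
  rw [mixMeasure]
  exact ((integrable_betaMeasure (by linarith) hβ hG).smul_measure ENNReal.ofReal_ne_top).add_measure
    ((integrable_betaMeasure (by linarith) hα hG).smul_measure ENNReal.ofReal_ne_top)

lemma integral_Icc_reflect (F : ℝ → ℝ) :
    ∫ l in Set.Icc (0:ℝ) 1, F (1 - l) ∂volume = ∫ l in Set.Icc (0:ℝ) 1, F l ∂volume := by
  rw [integral_Icc_eq_integral_Ioc, integral_Icc_eq_integral_Ioc,
    ← intervalIntegral.integral_of_le zero_le_one, ← intervalIntegral.integral_of_le zero_le_one,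
    intervalIntegral.integral_comp_sub_left F 1]
  norm_num

lemma betaDensity_succ_left (hα : 0 < α) (hβ : 0 < β) {l : ℝ} (hl : l ∈ Set.Icc (0:ℝ) 1) :
    (α / (α + β)) * betaDensity (α + 1) β l = l * betaDensity α β l := by
  unfold betaDensity betaFun
  rw [Real.Gamma_add_one hα.ne', show α + 1 + β = (α + β) + 1 by ring,
    Real.Gamma_add_one (by linarith : α + β ≠ 0)]
  have e1 : l ^ (α + 1 - 1) = l * l ^ (α - 1) := by
    rw [show α + 1 - 1 = α by ring]
    exact rpow_succ_self hl.1 hα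
  rw [e1]
  have g1 := (Real.Gamma_pos_of_pos hα).ne'
  have g2 := (Real.Gamma_pos_of_pos hβ).ne'
  have g3 := (Real.Gamma_pos_of_pos (by linarith : (0:ℝ) < α + β)).ne'
  field_simp

lemma betaDensity_succ_right (hα : 0 < α) (hβ : 0 < β) {l : ℝ} (hl : l ∈ Set.Icc (0:ℝ) 1) :
    (β / (α + β)) * betaDensity (β + 1) α l = l * betaDensity α β (1 - l) := by
  unfold betaDensity betaFun
  rw [Real.Gamma_add_one hβ.ne', show β + 1 + α = (α + β) + 1 by ring,
    Real.Gamma_add_one (by linarith : α + β ≠ 0)]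
  have e1 : l ^ (β + 1 - 1) = l * l ^ (β - 1) := by
    rw [show β + 1 - 1 = β by ring]
    exact rpow_succ_self hl.1 hβ
  rw [e1, show (1 : ℝ) - (1 - l) = l by ring]
  have g1 := (Real.Gamma_pos_of_pos hα).ne'
  have g2 := (Real.Gamma_pos_of_pos hβ).ne'
  have g3 := (Real.Gamma_pos_of_pos (by linarith : (0:ℝ) < α + β)).ne'
  field_simp

lemma integral_mixMeasure (hα : 0 < α) (hβ : 0 < β) {G : ℝ → ℝ} (hG : Continuous G) :
    ∫ l, G l ∂mixMeasure α β
      = ∫ l, (l * G l + (1 - l) * G (1 - l)) ∂betaMeasure α β := by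
  have hG1 : Continuous fun l : ℝ => l * G l := continuous_id.mul hG
  have hG2 : Continuous fun l : ℝ => (1 - l) * G (1 - l) :=
    ((continuous_const.sub continuous_id).mul (hG.comp (continuous_const.sub continuous_id)))
  -- LHS
  have lhs : ∫ l, G l ∂mixMeasure α β
      = (∫ l in Set.Icc (0:ℝ) 1, l * betaDensity α β l * G l ∂volume)
        + ∫ l in Set.Icc (0:ℝ) 1, l * betaDensity α β (1 - l) * G l ∂volume := by
    rw [mixMeasure, integral_add_measure
      ((integrable_betaMeasure (by linarith) hβ hG).smul_measure ENNReal.ofReal_ne_top)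
      ((integrable_betaMeasure (by linarith) hα hG).smul_measure ENNReal.ofReal_ne_top),
      integral_smul_measure, integral_smul_measure,
      ENNReal.toReal_ofReal (by positivity), ENNReal.toReal_ofReal (by positivity),
      integral_betaMeasure (by linarith) hβ hG, integral_betaMeasure (by linarith) hα hG,
      smul_eq_mul, smul_eq_mul, ← integral_const_mul, ← integral_const_mul]
    congr 1
    · apply setIntegral_congr_fun measurableSet_Icc
      intro l hl
      show (α / (α + β)) * (betaDensity (α+1) β l * G l) = l * betaDensity α β l * G l
      rw [← mul_assoc, betaDensity_succ_left hα hβ hl]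
    · apply setIntegral_congr_fun measurableSet_Icc
      intro l hl
      show (β / (α + β)) * (betaDensity (β+1) α l * G l) = l * betaDensity α β (1 - l) * G l
      rw [← mul_assoc, betaDensity_succ_right hα hβ hl]
  -- RHS
  have rhs : ∫ l, (l * G l + (1 - l) * G (1 - l)) ∂betaMeasure α β
      = (∫ l in Set.Icc (0:ℝ) 1, l * betaDensity α β l * G l ∂volume)
        + ∫ l in Set.Icc (0:ℝ) 1, l * betaDensity α β (1 - l) * G l ∂volume := by
    rw [integral_betaMeasure hα hβ (G := fun l => l * G l + (1 - l) * G (1 - l)) (hG1.add hG2)]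
    have split : ∫ l in Set.Icc (0:ℝ) 1,
        betaDensity α β l * (l * G l + (1 - l) * G (1 - l)) ∂volume
        = (∫ l in Set.Icc (0:ℝ) 1, betaDensity α β l * (l * G l) ∂volume)
          + ∫ l in Set.Icc (0:ℝ) 1, betaDensity α β l * ((1 - l) * G (1 - l)) ∂volume := by
      rw [← integral_add (integrableOn_betaDensity_mul hα hβ hG1)
        (integrableOn_betaDensity_mul hα hβ hG2)]
      apply setIntegral_congr_fun measurableSet_Icc
      intro l _
      ring
    rw [split]
    congr 1
    · apply setIntegral_congr_fun measurableSet_Icc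
      intro l _
      ring
    · have refl := integral_Icc_reflect
        (fun m => betaDensity α β m * ((1 - m) * G (1 - m)))
      rw [← refl]
      apply setIntegral_congr_fun measurableSet_Icc
      intro l _
      show betaDensity α β (1 - l) * ((1 - (1 - l)) * G (1 - (1 - l)))
        = l * betaDensity α β (1 - l) * G l
      rw [show (1:ℝ) - (1 - l) = l by ring]
      ring
  rw [lhs, rhs]

end Mix
open scoped RealInnerProductSpace

/-- Δᵢ = Σ_{k=1}^K (a^{k−1}/k!) D^k f(xᵢ)[(x'−xᵢ),…,(x'−xᵢ)] + a^{K−1} ψ(a). -/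
noncomputable def deltaFun {d C : ℕ} (K : ℕ)
    (f : EuclideanSpace ℝ (Fin d) → EuclideanSpace ℝ (Fin C))
    (x x' : EuclideanSpace ℝ (Fin d)) (ψ : ℝ → EuclideanSpace ℝ (Fin C)) (a : ℝ) :
    EuclideanSpace ℝ (Fin C) :=
  (∑ k ∈ Finset.Icc 1 K,
      (a ^ (k - 1) / (Nat.factorial k : ℝ)) • iteratedFDeriv ℝ k f x (fun _ => x' - x))
    + a ^ (K - 1) • ψ a

section Main

variable {d C K n : ℕ}
  (f : EuclideanSpace ℝ (Fin d) → EuclideanSpace ℝ (Fin C))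
  (h : EuclideanSpace ℝ (Fin C) → ℝ)
  (x : Fin n → EuclideanSpace ℝ (Fin d)) (y : Fin n → EuclideanSpace ℝ (Fin C))

/-- The remainder function for `f`. -/
noncomputable def psiF (K : ℕ) (f : EuclideanSpace ℝ (Fin d) → EuclideanSpace ℝ (Fin C))
    (x : Fin n → EuclideanSpace ℝ (Fin d)) (i j : Fin n) (a : ℝ) :
    EuclideanSpace ℝ (Fin C) :=
  if a = 0 then 0 else
    (a ^ K)⁻¹ • (f (x i + a • (x j - x i)) - ∑ k ∈ Finset.range (K + 1),
      ((k.factorial : ℝ))⁻¹ • iteratedFDeriv ℝ k f (x i) (fun _ => a • (x j - x i)))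

/-- The remainder function for `h`. -/
noncomputable def psiH (K : ℕ)
    (f : EuclideanSpace ℝ (Fin d) → EuclideanSpace ℝ (Fin C))
    (h : EuclideanSpace ℝ (Fin C) → ℝ)
    (x : Fin n → EuclideanSpace ℝ (Fin d)) (i j : Fin n) (a : ℝ) : ℝ :=
  if a = 0 then 0 else
    (a ^ K)⁻¹ * (h (f (x i + a • (x j - x i))) - h (f (x i)) -
      ∑ k ∈ Finset.Icc 1 K, (a ^ k / (k.factorial : ℝ)) *
        iteratedFDeriv ℝ k h (f (x i)) (fun _ => deltaFun K f (x i) (x j) (psiF K f x i j) a))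

lemma range_eq_insert_Icc (hK : 1 ≤ K) :
    Finset.range (K + 1) = insert 0 (Finset.Icc 1 K) := by
  ext k; simp [Finset.mem_range, Finset.mem_Icc]; omega

lemma delta_eq (hK : 1 ≤ K) (i j : Fin n) {a : ℝ} (ha : a ≠ 0) :
    a • deltaFun K f (x i) (x j) (psiF K f x i j) a
      = f (x i + a • (x j - x i)) - f (x i) := by
  unfold deltaFun psiF
  rw [if_neg ha, smul_add, Finset.smul_sum]
  have e1 : a • (a ^ (K - 1) • ((a ^ K)⁻¹ •
      (f (x i + a • (x j - x i)) - ∑ k ∈ Finset.range (K + 1),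
        ((k.factorial : ℝ))⁻¹ • iteratedFDeriv ℝ k f (x i) (fun _ => a • (x j - x i)))))
      = f (x i + a • (x j - x i)) - ∑ k ∈ Finset.range (K + 1),
        ((k.factorial : ℝ))⁻¹ • iteratedFDeriv ℝ k f (x i) (fun _ => a • (x j - x i)) := by
    rw [smul_smul, smul_smul]
    have h2 : a * a ^ (K - 1) = a ^ K := by
      rw [← pow_succ']
      congr 1
      omega
    rw [h2, mul_inv_cancel₀ (pow_ne_zero _ ha), one_smul]
  rw [e1]
  have e2 : ∀ k ∈ Finset.Icc 1 K, a • ((a ^ (k - 1) / (k.factorial : ℝ)) •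
      iteratedFDeriv ℝ k f (x i) (fun _ => x j - x i))
      = ((k.factorial : ℝ))⁻¹ • iteratedFDeriv ℝ k f (x i) (fun _ => a • (x j - x i)) := by
    intro k hk
    have hk1 : 1 ≤ k := (Finset.mem_Icc.1 hk).1
    have e3 : iteratedFDeriv ℝ k f (x i) (fun _ => a • (x j - x i))
        = a ^ k • iteratedFDeriv ℝ k f (x i) (fun _ => x j - x i) := by
      have := (iteratedFDeriv ℝ k f (x i)).map_smul_univ (fun _ => a) (fun _ => x j - x i)
      simpa using this
    rw [e3, smul_smul, smul_smul]
    congr 1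
    have h3 : a * a ^ (k - 1) = a ^ k := by
      rw [← pow_succ']
      congr 1
      omega
    field_simp
    first
      | exact h3
      | (rw [mul_comm] at h3; exact h3)
  rw [Finset.sum_congr rfl e2]
  have e4 : ∑ k ∈ Finset.range (K + 1), ((k.factorial : ℝ))⁻¹ •
      iteratedFDeriv ℝ k f (x i) (fun _ => a • (x j - x i))
      = f (x i) + ∑ k ∈ Finset.Icc 1 K, ((k.factorial : ℝ))⁻¹ •
        iteratedFDeriv ℝ k f (x i) (fun _ => a • (x j - x i)) := by
    rw [range_eq_insert_Icc hK, Finset.sum_insert (by simp)]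
    simp [iteratedFDeriv_zero_apply]
  rw [e4]
  abel


lemma point_eq (i j : Fin n) (l : ℝ) :
    l • x i + (1 - l) • x j = x i + (1 - l) • (x j - x i) := by
  module

lemma key_identity (hK : 1 ≤ K) (i j : Fin n) (l : ℝ) :
    (∑ k ∈ Finset.Icc 1 K, ((1 - l) ^ k / (Nat.factorial k : ℝ)) *
        iteratedFDeriv ℝ k h (f (x i))
          (fun _ => deltaFun K f (x i) (x j) (psiF K f x i j) (1 - l))
      - (1 - l) * ⟪y i, deltaFun K f (x i) (x j) (psiF K f x i j) (1 - l)⟫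
      + (1 - l) ^ K * psiH K f h x i j (1 - l))
    = (h (f (l • x i + (1 - l) • x j)) - ⟪y i, f (l • x i + (1 - l) • x j)⟫)
      - (h (f (x i)) - ⟪y i, f (x i)⟫) := by
  rw [point_eq x i j l]
  by_cases ha : (1 - l) = 0
  · rw [ha]
    have hz : ∀ k ∈ Finset.Icc 1 K, ((0:ℝ) ^ k / (Nat.factorial k : ℝ)) *
        iteratedFDeriv ℝ k h (f (x i))
          (fun _ => deltaFun K f (x i) (x j) (psiF K f x i j) 0) = 0 := by
      intro k hk
      have hk1 : 1 ≤ k := (Finset.mem_Icc.1 hk).1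
      rw [zero_pow (by omega), zero_div, zero_mul]
    rw [Finset.sum_eq_zero hz, psiH, if_pos rfl, mul_zero, zero_mul, zero_smul, add_zero]
    simp only [add_zero]
    ring
  · have hd := delta_eq f x hK i j ha
    have hinner : (1 - l) * ⟪y i, deltaFun K f (x i) (x j) (psiF K f x i j) (1 - l)⟫
        = ⟪y i, f (x i + (1 - l) • (x j - x i))⟫ - ⟪y i, f (x i)⟫ := by
      rw [← real_inner_smul_right, hd, inner_sub_right]
    have hps : (1 - l) ^ K * psiH K f h x i j (1 - l)
        = h (f (x i + (1 - l) • (x j - x i))) - h (f (x i)) -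
          ∑ k ∈ Finset.Icc 1 K, ((1 - l) ^ k / (Nat.factorial k : ℝ)) *
            iteratedFDeriv ℝ k h (f (x i))
              (fun _ => deltaFun K f (x i) (x j) (psiF K f x i j) (1 - l)) := by
      rw [psiH, if_neg ha, ← mul_assoc, mul_inv_cancel₀ (pow_ne_zero _ ha), one_mul]
    rw [hinner, hps]
    ring

lemma psiH_eq (hK : 1 ≤ K) (i j : Fin n) {a : ℝ} (ha : a ≠ 0) :
    psiH K f h x i j a = (a ^ K)⁻¹ *
      (h (f (x i) + (f (x i + a • (x j - x i)) - f (x i)))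
        - ∑ k ∈ Finset.range (K + 1), ((k.factorial : ℝ))⁻¹ •
            iteratedFDeriv ℝ k h (f (x i))
              (fun _ => f (x i + a • (x j - x i)) - f (x i))) := by
  rw [psiH, if_neg ha]
  congr 1
  rw [add_sub_cancel]
  have hu : f (x i + a • (x j - x i)) - f (x i)
      = a • deltaFun K f (x i) (x j) (psiF K f x i j) a := (delta_eq f x hK i j ha).symm
  have e : ∑ k ∈ Finset.range (K + 1), ((k.factorial : ℝ))⁻¹ •
      iteratedFDeriv ℝ k h (f (x i)) (fun _ => f (x i + a • (x j - x i)) - f (x i))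
      = h (f (x i)) + ∑ k ∈ Finset.Icc 1 K, (a ^ k / (k.factorial : ℝ)) *
          iteratedFDeriv ℝ k h (f (x i))
            (fun _ => deltaFun K f (x i) (x j) (psiF K f x i j) a) := by
    rw [range_eq_insert_Icc hK, Finset.sum_insert (by simp)]
    congr 1
    · simp [iteratedFDeriv_zero_apply]
    · refine Finset.sum_congr rfl fun k hk => ?_
      rw [hu]
      have e3 : iteratedFDeriv ℝ k h (f (x i))
          (fun _ => a • deltaFun K f (x i) (x j) (psiF K f x i j) a)
          = a ^ k • iteratedFDeriv ℝ k h (f (x i))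
            (fun _ => deltaFun K f (x i) (x j) (psiF K f x i j) a) := by
        have := (iteratedFDeriv ℝ k h (f (x i))).map_smul_univ
          (fun _ => a) (fun _ => deltaFun K f (x i) (x j) (psiF K f x i j) a)
        simpa using this
      rw [e3, smul_eq_mul, smul_eq_mul, ← mul_assoc]
      congr 1
      rw [mul_comm, div_eq_mul_inv]
  rw [e]
  ring


lemma tendsto_psiF (hf : ContDiff ℝ K f) (i j : Fin n) :
    Filter.Tendsto (psiF K f x i j) (nhdsWithin 0 (Set.Ioc (0:ℝ) 1)) (nhds 0) := by
  rw [NormedAddCommGroup.tendsto_nhds_zero]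
  intro ε hε
  have hr := taylor_peano K f (x i) hf
  set v := x j - x i with hv
  have hc : 0 < ε / (2 * (‖v‖ ^ K + 1)) := by positivity
  have h1 := hr.def hc
  rw [Metric.eventually_nhds_iff] at h1
  obtain ⟨δ, hδ, hb⟩ := h1
  have hρ : 0 < δ / (‖v‖ + 1) := by positivity
  have E3 : ∀ᶠ a : ℝ in nhds 0, |a| < δ / (‖v‖ + 1) := by
    filter_upwards [Metric.ball_mem_nhds (0:ℝ) hρ] with a ha
    simpa [Real.dist_eq] using ha
  filter_upwards [E3.filter_mono nhdsWithin_le_nhds, self_mem_nhdsWithin] with a ha hmem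
  have ha0 : 0 < a := hmem.1
  have ha1 : a ≤ 1 := hmem.2
  have hane : a ≠ 0 := ha0.ne'
  rw [abs_of_pos ha0] at ha
  have hav : dist (a • v) 0 < δ := by
    rw [dist_zero_right, norm_smul, Real.norm_eq_abs, abs_of_pos ha0]
    have : a * ‖v‖ ≤ a * (‖v‖ + 1) := by nlinarith [norm_nonneg v]
    calc a * ‖v‖ ≤ a * (‖v‖ + 1) := this
      _ < δ := by
          rw [lt_div_iff₀ (by positivity)] at ha
          linarith
  have hbb := hb hav
  rw [Real.norm_eq_abs, abs_of_nonneg (pow_nonneg (norm_nonneg _) K)] at hbb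
  have hak : (0:ℝ) < a ^ K := by positivity
  have havK : ‖a • v‖ ^ K = a ^ K * ‖v‖ ^ K := by
    rw [norm_smul, Real.norm_eq_abs, abs_of_pos ha0, mul_pow]
  calc ‖psiF K f x i j a‖
      = (a ^ K)⁻¹ * ‖f (x i + a • v) - ∑ k ∈ Finset.range (K + 1),
          ((k.factorial : ℝ))⁻¹ • iteratedFDeriv ℝ k f (x i) (fun _ => a • v)‖ := by
        rw [psiF, if_neg hane, norm_smul, Real.norm_eq_abs, abs_inv, abs_pow, abs_of_pos ha0]
    _ ≤ (a ^ K)⁻¹ * ((ε / (2 * (‖v‖ ^ K + 1))) * ‖a • v‖ ^ K) := by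
        apply mul_le_mul_of_nonneg_left hbb (by positivity)
    _ = (ε / (2 * (‖v‖ ^ K + 1))) * ‖v‖ ^ K := by
        rw [havK]
        field_simp
    _ < ε := by
        rw [div_mul_eq_mul_div, div_lt_iff₀ (by positivity)]
        nlinarith [pow_nonneg (norm_nonneg v) K]

lemma tendsto_psiH (hK : 1 ≤ K) (hf : ContDiff ℝ K f) (hh : ContDiff ℝ K h) (i j : Fin n) :
    Filter.Tendsto (psiH K f h x i j) (nhdsWithin 0 (Set.Ioc (0:ℝ) 1)) (nhds 0) := by
  rw [NormedAddCommGroup.tendsto_nhds_zero]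
  intro ε hε
  set v := x j - x i with hv
  set M : ℝ := (∑ k ∈ Finset.Icc 1 K, ‖iteratedFDeriv ℝ k f (x i) (fun _ => v)‖) + 1 with hM
  have hMsum : 0 ≤ ∑ k ∈ Finset.Icc 1 K, ‖iteratedFDeriv ℝ k f (x i) (fun _ => v)‖ :=
    Finset.sum_nonneg fun k _ => norm_nonneg _
  have hM0 : 0 < M := by rw [hM]; linarith
  have hr := taylor_peano K h (f (x i)) hh
  have hc : 0 < ε / (2 * (M ^ K + 1)) := by positivity
  have h1 := hr.def hc
  rw [Metric.eventually_nhds_iff] at h1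
  obtain ⟨δ, hδ, hb⟩ := h1
  have hρ : 0 < δ / (M + 1) := by positivity
  have E3 : ∀ᶠ a : ℝ in nhds 0, |a| < δ / (M + 1) := by
    filter_upwards [Metric.ball_mem_nhds (0:ℝ) hρ] with a ha
    simpa [Real.dist_eq] using ha
  have E1 : ∀ᶠ a in nhdsWithin 0 (Set.Ioc (0:ℝ) 1), ‖psiF K f x i j a‖ < 1 := by
    have := tendsto_psiF f x hf i j
    rw [NormedAddCommGroup.tendsto_nhds_zero] at this
    exact this 1 one_pos
  filter_upwards [E3.filter_mono nhdsWithin_le_nhds, self_mem_nhdsWithin, E1]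
    with a ha hmem hψ1
  have ha0 : 0 < a := hmem.1
  have ha1 : a ≤ 1 := hmem.2
  have hane : a ≠ 0 := ha0.ne'
  rw [abs_of_pos ha0] at ha
  -- bound on the norm of deltaFun
  have hΔ : ‖deltaFun K f (x i) (x j) (psiF K f x i j) a‖ ≤ M := by
    unfold deltaFun
    calc ‖(∑ k ∈ Finset.Icc 1 K,
          (a ^ (k - 1) / (Nat.factorial k : ℝ)) • iteratedFDeriv ℝ k f (x i) (fun _ => v))
          + a ^ (K - 1) • psiF K f x i j a‖
        ≤ ‖∑ k ∈ Finset.Icc 1 K,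
            (a ^ (k - 1) / (Nat.factorial k : ℝ)) • iteratedFDeriv ℝ k f (x i) (fun _ => v)‖
          + ‖a ^ (K - 1) • psiF K f x i j a‖ := norm_add_le _ _
      _ ≤ (∑ k ∈ Finset.Icc 1 K, ‖iteratedFDeriv ℝ k f (x i) (fun _ => v)‖) + 1 := by
          gcongr ?_ + ?_
          · apply (norm_sum_le _ _).trans
            apply Finset.sum_le_sum
            intro k hk
            rw [norm_smul, Real.norm_eq_abs, abs_div, abs_pow, abs_of_pos ha0, Nat.abs_cast]
            have h4 : a ^ (k - 1) / (Nat.factorial k : ℝ) ≤ 1 := by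
              apply div_le_one_of_le₀
              · calc a ^ (k-1) ≤ 1 := pow_le_one₀ ha0.le ha1
                  _ ≤ (Nat.factorial k : ℝ) := by exact_mod_cast k.factorial_pos
              · positivity
            have h5 : (0:ℝ) ≤ a ^ (k-1) / (Nat.factorial k : ℝ) := by positivity
            nlinarith [norm_nonneg (iteratedFDeriv ℝ k f (x i) (fun _ => v))]
          · rw [norm_smul, Real.norm_eq_abs, abs_pow, abs_of_pos ha0]
            have h6 : a ^ (K - 1) ≤ 1 := pow_le_one₀ ha0.le ha1
            have h7 : (0:ℝ) ≤ a ^ (K-1) := by positivity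
            nlinarith [norm_nonneg (psiF K f x i j a)]
      _ = M := hM.symm
  have huΔ : f (x i + a • v) - f (x i)
      = a • deltaFun K f (x i) (x j) (psiF K f x i j) a := (delta_eq f x hK i j hane).symm
  have hunorm : ‖f (x i + a • v) - f (x i)‖ ≤ a * M := by
    rw [huΔ, norm_smul, Real.norm_eq_abs, abs_of_pos ha0]
    exact mul_le_mul_of_nonneg_left hΔ ha0.le
  have hult : dist (f (x i + a • v) - f (x i)) 0 < δ := by
    rw [dist_zero_right]
    calc ‖f (x i + a • v) - f (x i)‖ ≤ a * M := hunorm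
      _ ≤ a * (M + 1) := by nlinarith
      _ < δ := by
          rw [lt_div_iff₀ (by positivity)] at ha
          linarith
  have hbb := hb hult
  rw [show ‖‖f (x i + a • v) - f (x i)‖ ^ K‖ = ‖f (x i + a • v) - f (x i)‖ ^ K from by
    rw [Real.norm_eq_abs, abs_of_nonneg (pow_nonneg (norm_nonneg _) K)]] at hbb
  have hak : (0:ℝ) < a ^ K := by positivity
  calc ‖psiH K f h x i j a‖
      = (a ^ K)⁻¹ * ‖h (f (x i) + (f (x i + a • v) - f (x i)))
          - ∑ k ∈ Finset.range (K + 1), ((k.factorial : ℝ))⁻¹ •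
              iteratedFDeriv ℝ k h (f (x i)) (fun _ => f (x i + a • v) - f (x i))‖ := by
        rw [psiH_eq f h x hK i j hane, Real.norm_eq_abs, abs_mul, abs_inv, abs_pow,
          abs_of_pos ha0, Real.norm_eq_abs]
    _ ≤ (a ^ K)⁻¹ * ((ε / (2 * (M ^ K + 1))) * ‖f (x i + a • v) - f (x i)‖ ^ K) := by
        apply mul_le_mul_of_nonneg_left hbb (by positivity)
    _ ≤ (a ^ K)⁻¹ * ((ε / (2 * (M ^ K + 1))) * (a * M) ^ K) := by
        apply mul_le_mul_of_nonneg_left _ (by positivity)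
        apply mul_le_mul_of_nonneg_left _ (by positivity)
        exact pow_le_pow_left₀ (norm_nonneg _) hunorm K
    _ = (ε / (2 * (M ^ K + 1))) * M ^ K := by
        rw [mul_pow]
        field_simp
    _ < ε := by
        rw [div_mul_eq_mul_div, div_lt_iff₀ (by positivity)]
        nlinarith [pow_pos hM0 K]


lemma main_calc {n : ℕ} {α β : ℝ} (hα : 0 < α) (hβ : 0 < β)
    (q : Fin n → Fin n → ℝ → ℝ) (L : Fin n → ℝ)
    (hqc : ∀ i j, Continuous (q i j))
    (hn : (n:ℝ) ≠ 0)
    (mOrig : Fin n → Fin n → ℝ → ℝ) (R : Fin n → ℝ → ℝ)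
    (hm : ∀ i j l, mOrig i j l = l * q i j l + (1 - l) * q j i (1 - l))
    (hR : ∀ i l, R i l = (1 / (n:ℝ)) * ∑ j, (q i j l - L i)) :
    (1 / (n:ℝ)^2) * ∑ i, ∑ j, ∫ l, mOrig i j l ∂betaMeasure α β
      = (1 / (n:ℝ)) * ∑ i, L i + (1 / (n:ℝ)) * ∑ i, ∫ l, R i l ∂mixMeasure α β := by
  have hq1 : ∀ i j, Continuous fun l : ℝ => l * q i j l := fun i j => continuous_id.mul (hqc i j)
  have hq2 : ∀ i j, Continuous fun l : ℝ => (1 - l) * q i j (1 - l) := fun i j =>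
    (continuous_const.sub continuous_id).mul ((hqc i j).comp (continuous_const.sub continuous_id))
  have beta_int : ∀ i j, ∫ l, mOrig i j l ∂betaMeasure α β
      = (∫ l, l * q i j l ∂betaMeasure α β)
        + ∫ l, (1 - l) * q j i (1 - l) ∂betaMeasure α β := by
    intro i j
    rw [integral_congr_ae (Filter.Eventually.of_forall fun l => hm i j l)]
    exact integral_add (integrable_betaMeasure hα hβ (hq1 i j))
      (integrable_betaMeasure hα hβ (hq2 j i))
  have mix_int : ∀ i j, ∫ l, q i j l ∂mixMeasure α β
      = (∫ l, l * q i j l ∂betaMeasure α β)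
        + ∫ l, (1 - l) * q i j (1 - l) ∂betaMeasure α β := by
    intro i j
    rw [integral_mixMeasure hα hβ (hqc i j)]
    exact integral_add (integrable_betaMeasure hα hβ (hq1 i j))
      (integrable_betaMeasure hα hβ (hq2 i j))
  have lhs_eq : ∑ i, ∑ j, ∫ l, mOrig i j l ∂betaMeasure α β
      = ∑ i, ∑ j, ∫ l, q i j l ∂mixMeasure α β := by
    rw [Finset.sum_congr rfl fun i _ => Finset.sum_congr rfl fun j _ => beta_int i j]
    rw [Finset.sum_congr rfl fun i _ => Finset.sum_congr rfl fun j _ => mix_int i j]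
    rw [Finset.sum_congr rfl fun (i : Fin n) _ =>
      (Finset.sum_add_distrib (s := Finset.univ)
        (f := fun j => ∫ l, l * q i j l ∂betaMeasure α β)
        (g := fun j => ∫ l, (1 - l) * q j i (1 - l) ∂betaMeasure α β)),
      Finset.sum_add_distrib]
    rw [Finset.sum_congr rfl fun (i : Fin n) _ =>
      (Finset.sum_add_distrib (s := Finset.univ)
        (f := fun j => ∫ l, l * q i j l ∂betaMeasure α β)
        (g := fun j => ∫ l, (1 - l) * q i j (1 - l) ∂betaMeasure α β)),
      Finset.sum_add_distrib]
    congr 1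
    exact Finset.sum_comm
  have rhs_int : ∀ i, ∫ l, R i l ∂mixMeasure α β
      = (1/(n:ℝ)) * ∑ j, ((∫ l, q i j l ∂mixMeasure α β) - L i) := by
    intro i
    haveI : IsProbabilityMeasure (mixMeasure α β) := ⟨mixMeasure_univ hα hβ⟩
    rw [integral_congr_ae (Filter.Eventually.of_forall fun l => hR i l)]
    rw [MeasureTheory.integral_const_mul]
    congr 1
    rw [integral_finset_sum (μ := mixMeasure α β) Finset.univ
      (f := fun (j : Fin n) (a : ℝ) => q i j a - L i)
      (fun j _ => (integrable_mixMeasure hα hβ (hqc i j)).sub (integrable_const _))]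
    refine Finset.sum_congr rfl fun j _ => ?_
    rw [integral_sub (integrable_mixMeasure hα hβ (hqc i j)) (integrable_const _),
      integral_const]
    simp
  rw [lhs_eq, Finset.sum_congr rfl fun i _ => rhs_int i]
  have e1 : ∀ i : Fin n, ∑ j, ((∫ l, q i j l ∂mixMeasure α β) - L i)
      = (∑ j, ∫ l, q i j l ∂mixMeasure α β) - (n:ℝ) * L i := by
    intro i
    rw [Finset.sum_sub_distrib, Finset.sum_const, Finset.card_univ, Fintype.card_fin,
      nsmul_eq_mul]
  simp only [e1]
  have e2 : ∑ i : Fin n, (1/(n:ℝ)) * ((∑ j, ∫ l, q i j l ∂mixMeasure α β) - (n:ℝ) * L i)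
      = (1/(n:ℝ)) * ((∑ i, ∑ j, ∫ l, q i j l ∂mixMeasure α β) - (n:ℝ) * ∑ i, L i) := by
    rw [← Finset.mul_sum, Finset.sum_sub_distrib, ← Finset.mul_sum]
  rw [e2]
  field_simp
  ring

end Main

/-- the implicit regularization of Mixup.  With ℓ(x,y) = h(f(x)) − yᵀ f(x),
f,h ∈ C^K (K ≥ 1), samples (xᵢ,yᵢ), and α,β > 0, there are remainder functions
ψ_{i,x'}, ψ̂_{i,x'} (indexed by i and x' = xⱼ), each tending to 0 as a → 0⁺, such that the
Mixup loss equals the standard empirical loss plus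
(1/n) Σᵢ E_{λ∼D_λ} E_{x'∼D_X} [ Σ_{k=1}^K (a_λ^k/k!) D^k h(f(xᵢ))[Δᵢ,…,Δᵢ]
  − a_λ yᵢᵀ Δᵢ + a_λ^K ψ̂_{i,x'}(a_λ) ],  a_λ = 1−λ,
where the empirical expectation E_{x'∼D_X} is written as (1/n) Σⱼ. -/
theorem mixup_implicit_regularization (d C K n : ℕ) (hK : 1 ≤ K) (hn : 0 < n)
    (f : EuclideanSpace ℝ (Fin d) → EuclideanSpace ℝ (Fin C))
    (h : EuclideanSpace ℝ (Fin C) → ℝ)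
    (hf : ContDiff ℝ K f) (hh : ContDiff ℝ K h)
    (x : Fin n → EuclideanSpace ℝ (Fin d)) (y : Fin n → EuclideanSpace ℝ (Fin C))
    (α β : ℝ) (hα : 0 < α) (hβ : 0 < β) :
    ∃ (ψ : Fin n → Fin n → ℝ → EuclideanSpace ℝ (Fin C)) (ψh : Fin n → Fin n → ℝ → ℝ),
      (∀ i j, Filter.Tendsto (ψ i j) (nhdsWithin 0 (Set.Ioc (0 : ℝ) 1)) (nhds 0)) ∧
      (∀ i j, Filter.Tendsto (ψh i j) (nhdsWithin 0 (Set.Ioc (0 : ℝ) 1)) (nhds 0)) ∧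
      (1 / (n : ℝ) ^ 2) * ∑ i, ∑ j,
          ∫ l, (h (f (l • x i + (1 - l) • x j))
              - ⟪l • y i + (1 - l) • y j, f (l • x i + (1 - l) • x j)⟫) ∂betaMeasure α β
        = (1 / (n : ℝ)) * ∑ i, (h (f (x i)) - ⟪y i, f (x i)⟫)
          + (1 / (n : ℝ)) * ∑ i,
              ∫ l, ((1 / (n : ℝ)) * ∑ j,
                  (∑ k ∈ Finset.Icc 1 K,
                      ((1 - l) ^ k / (Nat.factorial k : ℝ)) *
                        iteratedFDeriv ℝ k h (f (x i))
                          (fun _ => deltaFun K f (x i) (x j) (ψ i j) (1 - l))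
                    - (1 - l) * ⟪y i, deltaFun K f (x i) (x j) (ψ i j) (1 - l)⟫
                    + (1 - l) ^ K * ψh i j (1 - l))) ∂mixMeasure α β := by
  have hn' : (n:ℝ) ≠ 0 := Nat.cast_ne_zero.2 hn.ne'
  refine ⟨psiF K f x, psiH K f h x, fun i j => tendsto_psiF f x hf i j,
    fun i j => tendsto_psiH f h x hK hf hh i j, ?_⟩
  have hline : ∀ i j : Fin n, Continuous fun l : ℝ => l • x i + (1 - l) • x j := by
    intro i j
    exact (continuous_id.smul continuous_const).add
      ((continuous_const.sub continuous_id).smul continuous_const)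
  have hqc : ∀ i j : Fin n, Continuous fun l : ℝ =>
      h (f (l • x i + (1 - l) • x j)) - ⟪y i, f (l • x i + (1 - l) • x j)⟫ := by
    intro i j
    exact (hh.continuous.comp (hf.continuous.comp (hline i j))).sub
      (continuous_const.inner (hf.continuous.comp (hline i j)))
  have hm : ∀ (i j : Fin n) (l : ℝ),
      h (f (l • x i + (1 - l) • x j))
          - ⟪l • y i + (1 - l) • y j, f (l • x i + (1 - l) • x j)⟫
      = l * (h (f (l • x i + (1 - l) • x j)) - ⟪y i, f (l • x i + (1 - l) • x j)⟫)
        + (1 - l) * (h (f ((1 - l) • x j + (1 - (1 - l)) • x i))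
            - ⟪y j, f ((1 - l) • x j + (1 - (1 - l)) • x i)⟫) := by
    intro i j l
    have hpt : (1 - l) • x j + (1 - (1 - l)) • x i = l • x i + (1 - l) • x j := by module
    rw [hpt, inner_add_left, real_inner_smul_left, real_inner_smul_left]
    ring
  have hR : ∀ (i : Fin n) (l : ℝ),
      ((1 / (n : ℝ)) * ∑ j,
        (∑ k ∈ Finset.Icc 1 K,
            ((1 - l) ^ k / (Nat.factorial k : ℝ)) *
              iteratedFDeriv ℝ k h (f (x i))
                (fun _ => deltaFun K f (x i) (x j) (psiF K f x i j) (1 - l))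
          - (1 - l) * ⟪y i, deltaFun K f (x i) (x j) (psiF K f x i j) (1 - l)⟫
          + (1 - l) ^ K * psiH K f h x i j (1 - l)))
      = (1 / (n : ℝ)) * ∑ j,
          ((h (f (l • x i + (1 - l) • x j)) - ⟪y i, f (l • x i + (1 - l) • x j)⟫)
            - (h (f (x i)) - ⟪y i, f (x i)⟫)) := by
    intro i l
    congr 1
    exact Finset.sum_congr rfl fun j _ => key_identity f h x y hK i j l
  exact main_calc hα hβ
    (fun i j l => h (f (l • x i + (1 - l) • x j)) - ⟪y i, f (l • x i + (1 - l) • x j)⟫)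
    (fun i => h (f (x i)) - ⟪y i, f (x i)⟫)
    hqc hn'
    (fun i j l => h (f (l • x i + (1 - l) • x j))
      - ⟪l • y i + (1 - l) • y j, f (l • x i + (1 - l) • x j)⟫)
    (fun i l => (1 / (n : ℝ)) * ∑ j,
        (∑ k ∈ Finset.Icc 1 K,
            ((1 - l) ^ k / (Nat.factorial k : ℝ)) *
              iteratedFDeriv ℝ k h (f (x i))
                (fun _ => deltaFun K f (x i) (x j) (psiF K f x i j) (1 - l))
          - (1 - l) * ⟪y i, deltaFun K f (x i) (x j) (psiF K f x i j) (1 - l)⟫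
          + (1 - l) ^ K * psiH K f h x i j (1 - l)))
    hm hR
end

section
/- Let K ≥ 1, let f : ℝ^d → ℝ^C and h : ℝ^C → ℝ be K-times continuously differentiable, and fix x, x' ∈ ℝ^d and y ∈ ℝ^C. Then there exist functions ψ : (0,1] → ℝ^C and ψ̂ : (0,1] → ℝ, both tending to 0 as the argument tends to 0, such that for every a ∈ (0,1], writing Δ(a) = Σ_{k=1}^K (a^{k−1}/k!) D^k f(x)[(x'−x),…,(x'−x)] + a^{K−1} ψ(a), one has h(f(x + a(x'−x))) − yᵀ f(x + a(x'−x)) = h(f(x)) − yᵀ f(x) − a · yᵀ Δ(a) + Σ_{k=1}^K (a^k/k!) D^k h(f(x))[Δ(a),…,Δ(a)] + a^K ψ̂(a). -/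
open scoped BigOperators RealInnerProductSpace

section
variable {E F : Type*} [NormedAddCommGroup E] [NormedSpace ℝ E]
  [NormedAddCommGroup F] [NormedSpace ℝ F]

lemma iteratedDerivWithin_eq_iteratedDeriv_of_contDiff {g : ℝ → F} {K : ℕ}
    (hg : ContDiff ℝ (K : ℕ∞) g) {n : ℕ} (hn : n ≤ K) {s : Set ℝ}
    (hs : UniqueDiffOn ℝ s) {t : ℝ} (ht : t ∈ s) :
    iteratedDerivWithin n g s t = iteratedDeriv n g t := by
  rw [iteratedDerivWithin_eq_iteratedFDerivWithin, iteratedDeriv_eq_iteratedFDeriv]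
  congr 1
  have H := (contDiff_iff_ftaylorSeries.mp hg).hasFTaylorSeriesUpToOn s
  rw [← H.eq_iteratedFDerivWithin_of_uniqueDiffOn (by exact_mod_cast hn) hs ht]
  rfl

lemma iteratedDeriv_pow_smul (K k : ℕ) (c : F) (t : ℝ) :
    iteratedDeriv k (fun t : ℝ => t ^ K • c) t
      = ((K.descFactorial k : ℝ) * t ^ (K - k)) • c := by
  induction k generalizing t with
  | zero => simp
  | succ k IH =>
    rw [iteratedDeriv_succ]
    have hIH : iteratedDeriv k (fun t : ℝ => t ^ K • c)
        = fun t : ℝ => ((K.descFactorial k : ℝ) * t ^ (K - k)) • c := funext fun t => IH t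
    rw [hIH]
    have hd : HasDerivAt (fun t : ℝ => ((K.descFactorial k : ℝ) * t ^ (K - k)) • c)
        ((((K.descFactorial k : ℝ)) * ((K - k : ℕ) * t ^ (K - k - 1))) • c) t :=
      (((hasDerivAt_pow (K - k) t)).const_mul ((K.descFactorial k : ℝ))).smul_const c
    rw [hd.deriv]
    congr 1
    rw [Nat.descFactorial_succ]
    rw [Nat.sub_sub]
    push_cast
    ring_nf

lemma iteratedDeriv_line {h : E → F} {K : ℕ} (hh : ContDiff ℝ (K : ℕ∞) h) (z w : E)
    {n : ℕ} (hn : n ≤ K) (t : ℝ) :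
    iteratedDeriv n (fun s : ℝ => h (z + s • w)) t
      = iteratedFDeriv ℝ n h (z + t • w) (fun _ => w) := by
  induction n generalizing t with
  | zero => simp
  | succ n IH =>
    rw [iteratedDeriv_succ]
    have hIH : (iteratedDeriv n (fun s : ℝ => h (z + s • w)))
        = fun s : ℝ => iteratedFDeriv ℝ n h (z + s • w) (fun _ => w) :=
      funext fun s => IH (le_of_lt (Nat.lt_of_succ_le hn)) s
    rw [hIH]
    have hcurve : HasDerivAt (fun s : ℝ => z + s • w) w t := by
      simpa using ((hasDerivAt_id t).smul_const w).const_add z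
    have hdiff : Differentiable ℝ (iteratedFDeriv ℝ n h) :=
      hh.differentiable_iteratedFDeriv (by exact_mod_cast Nat.lt_of_succ_le hn)
    have h1 : HasDerivAt (fun s : ℝ => iteratedFDeriv ℝ n h (z + s • w))
        (fderiv ℝ (iteratedFDeriv ℝ n h) (z + t • w) w) t :=
      (hdiff (z + t • w)).hasFDerivAt.comp_hasDerivAt t hcurve
    have h2 := ((ContinuousMultilinearMap.apply ℝ (fun _ : Fin n => E) F
        (fun _ => w)).hasFDerivAt.comp_hasDerivAt t h1)
    have h2' : HasDerivAt (fun s : ℝ => iteratedFDeriv ℝ n h (z + s • w) (fun _ => w))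
        ((fderiv ℝ (iteratedFDeriv ℝ n h) (z + t • w) w) (fun _ => w)) t := h2
    rw [h2'.deriv, iteratedFDeriv_succ_apply_left]
    congr 1

/-- Multivariate Taylor expansion with Peano-type remainder control. -/
lemma peano_bound {h : E → F} {K : ℕ} (hK : 1 ≤ K) (hh : ContDiff ℝ (K : ℕ∞) h) (z : E)
    {ε : ℝ} (hε : 0 < ε) :
    ∃ δ > 0, ∀ w : E, ‖w‖ ≤ δ →
      ‖h (z + w) - ∑ k ∈ Finset.range (K + 1),
          ((k.factorial : ℝ))⁻¹ • iteratedFDeriv ℝ k h z (fun _ => w)‖ ≤ ε * ‖w‖ ^ K := by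
  -- continuity of the K-th derivative at z
  have hcont : ContinuousAt (iteratedFDeriv ℝ K h) z :=
    (hh.continuous_iteratedFDeriv (le_refl _)).continuousAt
  rcases Metric.continuousAt_iff.mp hcont ε hε with ⟨δ', hδ', hball⟩
  refine ⟨δ' / 2, by positivity, fun w hw => ?_⟩
  have hDK : ∀ u : E, ‖u‖ ≤ δ' / 2 →
      ‖iteratedFDeriv ℝ K h (z + u) - iteratedFDeriv ℝ K h z‖ ≤ ε := by
    intro u hu
    have : dist (z + u) z < δ' := by
      rw [dist_eq_norm]
      simpa using lt_of_le_of_lt hu (by linarith)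
    have := hball this
    rw [dist_eq_norm] at this
    exact this.le
  set c : ContinuousMultilinearMap ℝ (fun _ : Fin K => E) F := iteratedFDeriv ℝ K h z with hc
  set c₀ : F := ((K.factorial : ℝ))⁻¹ • (c (fun _ => w)) with hc0
  set g : ℝ → F := fun t => h (z + t • w) with hgdef
  set m : ℝ → F := fun t => t ^ K • c₀ with hmdef
  have hg : ContDiff ℝ (K : ℕ∞) g :=
    hh.comp (contDiff_const.add (contDiff_id.smul contDiff_const))
  have hm : ContDiff ℝ (K : ℕ∞) m := (contDiff_id.pow K).smul contDiff_const
  have hr : ContDiff ℝ (K : ℕ∞) (g - m) := hg.sub hm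
  have hK1 : K - 1 + 1 = K := Nat.succ_pred_eq_of_pos hK
  have huniq : UniqueDiffOn ℝ (Set.Icc (0:ℝ) 1) := uniqueDiffOn_Icc zero_lt_one
  have hfact_ne : (K.factorial : ℝ) ≠ 0 := Nat.cast_ne_zero.mpr K.factorial_ne_zero
  -- the K-th derivative of g - m
  have hKderiv : ∀ y ∈ Set.Icc (0:ℝ) 1, iteratedDerivWithin K (g - m) (Set.Icc 0 1) y
      = iteratedFDeriv ℝ K h (z + y • w) (fun _ => w) - c (fun _ => w) := by
    intro y hy
    rw [iteratedDerivWithin_eq_iteratedDeriv_of_contDiff hr (le_refl K) huniq hy]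
    have : (g - m) = fun t => g t - m t := rfl
    rw [this]
    have hsub : iteratedDeriv K (fun t => g t - m t) y
        = iteratedDeriv K g y - iteratedDeriv K m y := by
      have := iteratedDerivWithin_sub (n := K) (Set.mem_univ y) uniqueDiffOn_univ
        (by exact_mod_cast hg.contDiffAt.contDiffWithinAt (s := Set.univ))
        (by exact_mod_cast hm.contDiffAt.contDiffWithinAt (s := Set.univ))
      simp only [iteratedDerivWithin_univ] at this; exact this
    rw [hsub, iteratedDeriv_line hh z w (le_refl K) y]
    congr 1
    rw [hmdef, iteratedDeriv_pow_smul, Nat.descFactorial_self, Nat.sub_self, pow_zero, mul_one,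
      hc0, smul_smul, mul_inv_cancel₀ hfact_ne, one_smul]
  -- bound on the K-th derivative of g - m
  have hC : ∀ y ∈ Set.Icc (0:ℝ) 1,
      ‖iteratedDerivWithin K (g - m) (Set.Icc 0 1) y‖ ≤ ε * ‖w‖ ^ K := by
    intro y hy
    rw [hKderiv y hy]
    have h1 : iteratedFDeriv ℝ K h (z + y • w) (fun _ => w) - c (fun _ => w)
        = (iteratedFDeriv ℝ K h (z + y • w) - c) (fun _ => w) := rfl
    rw [h1]
    calc ‖(iteratedFDeriv ℝ K h (z + y • w) - c) (fun _ => w)‖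
        ≤ ‖iteratedFDeriv ℝ K h (z + y • w) - c‖ * ∏ _i : Fin K, ‖w‖ :=
          (iteratedFDeriv ℝ K h (z + y • w) - c).le_opNorm _
      _ ≤ ε * ‖w‖ ^ K := by
          rw [Finset.prod_const, Finset.card_univ, Fintype.card_fin]
          apply mul_le_mul_of_nonneg_right _ (by positivity)
          apply hDK
          calc ‖y • w‖ = |y| * ‖w‖ := by rw [norm_smul, Real.norm_eq_abs]
            _ ≤ 1 * ‖w‖ := by
                apply mul_le_mul_of_nonneg_right _ (norm_nonneg w)
                rw [abs_of_nonneg hy.1]; exact hy.2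
            _ ≤ δ' / 2 := by simpa using hw
  -- Taylor's theorem with remainder bound
  have hfOn : ContDiffOn ℝ ((K - 1 : ℕ) + 1) (g - m) (Set.Icc 0 1) := by
    have h2 : ContDiff ℝ (((K - 1 : ℕ) + 1 : ℕ) : ℕ∞) (g - m) := by rw [hK1]; exact hr
    exact_mod_cast h2.contDiffOn
  have htaylor := taylor_mean_remainder_bound (f := g - m) (a := 0) (b := 1) (x := 1)
    (n := K - 1) zero_le_one hfOn (Set.right_mem_Icc.mpr zero_le_one)
    (by rw [hK1]; exact hC)
  -- identify the Taylor polynomial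
  have hlow : ∀ k : ℕ, k < K → iteratedDerivWithin k (g - m) (Set.Icc (0:ℝ) 1) 0
      = iteratedFDeriv ℝ k h z (fun _ => w) := by
    intro k hk
    rw [iteratedDerivWithin_eq_iteratedDeriv_of_contDiff hr hk.le huniq
      (Set.left_mem_Icc.mpr zero_le_one)]
    have : (g - m) = fun t => g t - m t := rfl
    rw [this]
    have hsub : iteratedDeriv k (fun t => g t - m t) 0
        = iteratedDeriv k g 0 - iteratedDeriv k m 0 := by
      have := iteratedDerivWithin_sub (n := k) (Set.mem_univ (0:ℝ)) uniqueDiffOn_univ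
        ((hg.of_le (by exact_mod_cast hk.le)).contDiffAt.contDiffWithinAt (s := Set.univ))
        ((hm.of_le (by exact_mod_cast hk.le)).contDiffAt.contDiffWithinAt (s := Set.univ))
      simp only [iteratedDerivWithin_univ] at this; exact this
    rw [hsub, iteratedDeriv_line hh z w hk.le 0, hmdef, iteratedDeriv_pow_smul]
    have : (0:ℝ) ^ (K - k) = 0 := zero_pow (Nat.sub_ne_zero_of_lt hk)
    simp [this]
  have hT : taylorWithinEval (g - m) (K - 1) (Set.Icc (0:ℝ) 1) 0 1
      = ∑ k ∈ Finset.range K, ((k.factorial : ℝ))⁻¹ • iteratedFDeriv ℝ k h z (fun _ => w) := by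
    rw [taylor_within_apply]
    rw [hK1]
    apply Finset.sum_congr rfl
    intro k hk
    rw [hlow k (Finset.mem_range.mp hk)]
    simp
  -- assemble
  have hval : (g - m) 1 - taylorWithinEval (g - m) (K - 1) (Set.Icc (0:ℝ) 1) 0 1
      = h (z + w) - ∑ k ∈ Finset.range (K + 1),
          ((k.factorial : ℝ))⁻¹ • iteratedFDeriv ℝ k h z (fun _ => w) := by
    rw [hT, Finset.sum_range_succ]
    have h1 : (g - m) 1 = h (z + w) - c₀ := by
      simp [hgdef, hmdef]
    rw [h1, hc0, hc]
    abel
  rw [← hval]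
  calc ‖(g - m) 1 - taylorWithinEval (g - m) (K - 1) (Set.Icc (0:ℝ) 1) 0 1‖
      ≤ ε * ‖w‖ ^ K * (1 - 0) ^ (K - 1 + 1) / (K - 1).factorial := htaylor
    _ ≤ ε * ‖w‖ ^ K := by
        rw [sub_zero, one_pow, mul_one]
        apply div_le_self (by positivity)
        exact_mod_cast Nat.one_le_iff_ne_zero.mpr (K - 1).factorial_ne_zero
end


set_option maxHeartbeats 1000000 in
/-- pointwise Taylor expansion of the Mixup loss ℓ(x,y) = h(f(x)) − yᵀ f(x)
around a = 0 along the segment from x toward x', with remainders ψ, ψ̂ vanishing as a → 0⁺. -/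
theorem mixup_loss_taylor_expansion (d C K : ℕ) (hK : 1 ≤ K)
    (f : EuclideanSpace ℝ (Fin d) → EuclideanSpace ℝ (Fin C))
    (h : EuclideanSpace ℝ (Fin C) → ℝ)
    (hf : ContDiff ℝ K f) (hh : ContDiff ℝ K h)
    (x x' : EuclideanSpace ℝ (Fin d)) (y : EuclideanSpace ℝ (Fin C)) :
    ∃ (ψ : ℝ → EuclideanSpace ℝ (Fin C)) (ψh : ℝ → ℝ),
      Filter.Tendsto ψ (nhdsWithin 0 (Set.Ioc (0 : ℝ) 1)) (nhds 0) ∧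
      Filter.Tendsto ψh (nhdsWithin 0 (Set.Ioc (0 : ℝ) 1)) (nhds 0) ∧
      ∀ a ∈ Set.Ioc (0 : ℝ) 1,
        h (f (x + a • (x' - x))) - ⟪y, f (x + a • (x' - x))⟫
          = h (f x) - ⟪y, f x⟫
            - a * ⟪y, deltaFun K f x x' ψ a⟫
            + ∑ k ∈ Finset.Icc 1 K,
                (a ^ k / (Nat.factorial k : ℝ)) *
                  iteratedFDeriv ℝ k h (f x) (fun _ => deltaFun K f x x' ψ a)
            + a ^ K * ψh a := by
  classical
  set v : EuclideanSpace ℝ (Fin d) := x' - x with hv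
  set L : ℕ → EuclideanSpace ℝ (Fin C) := fun k => iteratedFDeriv ℝ k f x (fun _ => v) with hL
  set ψ : ℝ → EuclideanSpace ℝ (Fin C) := fun a =>
    (a ^ K)⁻¹ • (f (x + a • v) - ∑ k ∈ Finset.range (K + 1),
      ((k.factorial : ℝ))⁻¹ • iteratedFDeriv ℝ k f x (fun _ => a • v)) with hψdef
  set ψh : ℝ → ℝ := fun a =>
    (a ^ K)⁻¹ • (h (f (x + a • v)) - ∑ k ∈ Finset.range (K + 1),
      ((k.factorial : ℝ))⁻¹ • iteratedFDeriv ℝ k h (f x) (fun _ => f (x + a • v) - f x))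
    with hψhdef
  have hins : Finset.range (K + 1) = insert 0 (Finset.Icc 1 K) := by
    ext n; simp only [Finset.mem_range, Finset.mem_insert, Finset.mem_Icc]; omega
  have hmap : ∀ (k : ℕ) (a : ℝ), iteratedFDeriv ℝ k f x (fun _ => a • v) = a ^ k • L k := by
    intro k a
    have := (iteratedFDeriv ℝ k f x).map_smul_univ (fun _ : Fin k => a) (fun _ => v)
    simpa [Finset.prod_const] using this
  -- ψ tends to 0
  have hψ0 : Filter.Tendsto ψ (nhdsWithin 0 (Set.Ioc (0 : ℝ) 1)) (nhds 0) := by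
    rw [Metric.tendsto_nhdsWithin_nhds]
    intro ε hε
    obtain ⟨δ, hδpos, hbound⟩ := peano_bound hK hf x
      (ε := ε / (‖v‖ ^ K + 1)) (by positivity)
    refine ⟨δ / (‖v‖ + 1), by positivity, ?_⟩
    intro a ha hdist
    rw [dist_zero_right, Real.norm_eq_abs, abs_of_pos ha.1] at hdist
    have hav : ‖a • v‖ ≤ δ := by
      rw [norm_smul, Real.norm_eq_abs, abs_of_pos ha.1]
      rw [lt_div_iff₀ (by positivity)] at hdist
      nlinarith [norm_nonneg v, ha.1]
    have hb := hbound (a • v) hav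
    rw [dist_zero_right, hψdef]
    have haK : (0:ℝ) < a ^ K := pow_pos ha.1 K
    rw [norm_smul, Real.norm_eq_abs, abs_inv, abs_of_pos haK]
    have hnorm : ‖a • v‖ ^ K = a ^ K * ‖v‖ ^ K := by
      rw [norm_smul, Real.norm_eq_abs, abs_of_pos ha.1, mul_pow]
    calc (a ^ K)⁻¹ * ‖f (x + a • v) - ∑ k ∈ Finset.range (K + 1),
            ((k.factorial : ℝ))⁻¹ • iteratedFDeriv ℝ k f x (fun _ => a • v)‖
        ≤ (a ^ K)⁻¹ * (ε / (‖v‖ ^ K + 1) * (a ^ K * ‖v‖ ^ K)) := by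
          apply mul_le_mul_of_nonneg_left _ (by positivity)
          rw [← hnorm]; exact hb
      _ = ε / (‖v‖ ^ K + 1) * ‖v‖ ^ K := by field_simp
      _ < ε := by
          rw [div_mul_eq_mul_div, div_lt_iff₀ (by positivity)]
          nlinarith [pow_nonneg (norm_nonneg v) K]
  -- key identity:  a • Δ(a) = f (x + a v) − f x  for a ∈ (0,1]
  have key : ∀ a ∈ Set.Ioc (0:ℝ) 1,
      a • deltaFun K f x x' ψ a = f (x + a • v) - f x := by
    intro a ha
    have ha0 : (0:ℝ) < a := ha.1
    have haK : a ^ K ≠ 0 := pow_ne_zero K (ne_of_gt ha0)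
    have hpow : ∀ k : ℕ, 1 ≤ k → a * a ^ (k - 1) = a ^ k := by
      intro k hk1
      conv_rhs => rw [← Nat.sub_add_cancel hk1]
      rw [pow_succ]; ring
    rw [deltaFun, smul_add, Finset.smul_sum, smul_smul, hpow K hK, hψdef]
    have hsum1 : ∀ k ∈ Finset.Icc 1 K,
        a • ((a ^ (k - 1) / (k.factorial : ℝ)) • iteratedFDeriv ℝ k f x (fun _ => x' - x))
          = (a ^ k / (k.factorial : ℝ)) • L k := by
      intro k hk
      rw [smul_smul]
      congr 1
      rw [← hpow k (Finset.mem_Icc.mp hk).1]; ring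
    rw [Finset.sum_congr rfl hsum1, smul_smul, mul_inv_cancel₀ haK, one_smul]
    have hsum2 : ∑ k ∈ Finset.range (K + 1),
        ((k.factorial : ℝ))⁻¹ • iteratedFDeriv ℝ k f x (fun _ => a • v)
          = f x + ∑ k ∈ Finset.Icc 1 K, (a ^ k / (k.factorial : ℝ)) • L k := by
      rw [hins, Finset.sum_insert (by simp)]
      congr 1
      · simp [iteratedFDeriv_zero_apply]
      · apply Finset.sum_congr rfl
        intro k hk
        rw [hmap, smul_smul]
        congr 1
        rw [div_eq_mul_inv]; ring
    rw [hsum2]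
    abel
  -- limit of Δ
  have hΔlim : Filter.Tendsto (fun a => deltaFun K f x x' ψ a)
      (nhdsWithin 0 (Set.Ioc (0 : ℝ) 1))
      (nhds ((∑ k ∈ Finset.Icc 1 K,
        ((0:ℝ) ^ (k - 1) / (k.factorial : ℝ)) • iteratedFDeriv ℝ k f x (fun _ => x' - x)) + 0)) := by
    apply Filter.Tendsto.add
    · apply Filter.Tendsto.mono_left _ nhdsWithin_le_nhds
      apply tendsto_finset_sum
      intro k _
      exact (((continuous_pow (k - 1)).div_const _).smul continuous_const).tendsto 0
    · have h1 : Filter.Tendsto (fun a : ℝ => a ^ (K - 1))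
          (nhdsWithin 0 (Set.Ioc (0 : ℝ) 1)) (nhds ((0:ℝ) ^ (K - 1))) :=
        ((continuous_pow (K-1)).tendsto 0).mono_left nhdsWithin_le_nhds
      have := h1.smul hψ0
      simpa using this
  obtain ⟨M, hMpos, hΔbd⟩ : ∃ M : ℝ, 0 < M ∧
      ∀ᶠ a in nhdsWithin 0 (Set.Ioc (0 : ℝ) 1), ‖deltaFun K f x x' ψ a‖ ≤ M := by
    set ℓ := (∑ k ∈ Finset.Icc 1 K,
        ((0:ℝ) ^ (k - 1) / (k.factorial : ℝ)) • iteratedFDeriv ℝ k f x (fun _ => x' - x)) + 0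
      with hℓ
    exact ⟨‖ℓ‖ + 1, by positivity,
      hΔlim.norm.eventually (eventually_le_nhds (by linarith))⟩
  have hid : Filter.Tendsto (fun a : ℝ => a) (nhdsWithin 0 (Set.Ioc (0 : ℝ) 1)) (nhds 0) :=
    Filter.tendsto_id.mono_left nhdsWithin_le_nhds
  -- ψh tends to 0
  have hψh0 : Filter.Tendsto ψh (nhdsWithin 0 (Set.Ioc (0 : ℝ) 1)) (nhds 0) := by
    rw [Metric.tendsto_nhds]
    intro ε hε
    obtain ⟨δ, hδpos, hbound⟩ := peano_bound hK hh (f x)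
      (ε := ε / (M ^ K + 1)) (by positivity)
    have hsmall : ∀ᶠ a in nhdsWithin 0 (Set.Ioc (0 : ℝ) 1), dist a 0 < δ / M :=
      (Metric.tendsto_nhds.mp hid) (δ / M) (by positivity)
    filter_upwards [self_mem_nhdsWithin, hΔbd, hsmall] with a ha hΔa hsa
    have ha0 : (0:ℝ) < a := ha.1
    have haK : (0:ℝ) < a ^ K := pow_pos ha0 K
    rw [dist_zero_right, Real.norm_eq_abs, abs_of_pos ha0] at hsa
    have hW : f (x + a • v) - f x = a • deltaFun K f x x' ψ a := (key a ha).symm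
    have hWM : ‖f (x + a • v) - f x‖ ≤ a * M := by
      rw [hW, norm_smul, Real.norm_eq_abs, abs_of_pos ha0]
      exact mul_le_mul_of_nonneg_left hΔa ha0.le
    have hWnorm : ‖f (x + a • v) - f x‖ ≤ δ :=
      hWM.trans ((lt_div_iff₀ hMpos).mp hsa).le
    have hb := hbound (f (x + a • v) - f x) hWnorm
    have hfix : f x + (f (x + a • v) - f x) = f (x + a • v) := by abel
    rw [hfix] at hb
    rw [dist_zero_right, hψhdef]
    have hXle : ‖h (f (x + a • v)) - ∑ k ∈ Finset.range (K + 1),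
        ((k.factorial : ℝ))⁻¹ • iteratedFDeriv ℝ k h (f x)
          (fun _ => f (x + a • v) - f x)‖ ≤ ε / (M ^ K + 1) * (a * M) ^ K := by
      refine hb.trans ?_
      apply mul_le_mul_of_nonneg_left _ (by positivity)
      exact pow_le_pow_left₀ (norm_nonneg _) hWM K
    rw [norm_smul, Real.norm_eq_abs, abs_inv, abs_of_pos haK]
    calc (a ^ K)⁻¹ * ‖h (f (x + a • v)) - ∑ k ∈ Finset.range (K + 1),
          ((k.factorial : ℝ))⁻¹ • iteratedFDeriv ℝ k h (f x)
            (fun _ => f (x + a • v) - f x)‖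
        ≤ (a ^ K)⁻¹ * (ε / (M ^ K + 1) * (a * M) ^ K) :=
          mul_le_mul_of_nonneg_left hXle (by positivity)
      _ = ε / (M ^ K + 1) * M ^ K := by
          rw [mul_pow]; field_simp
      _ < ε := by
          rw [div_mul_eq_mul_div, div_lt_iff₀ (by positivity)]
          nlinarith [pow_pos hMpos K]
  -- final algebraic identity
  refine ⟨ψ, ψh, hψ0, hψh0, ?_⟩
  intro a ha
  have ha0 : (0:ℝ) < a := ha.1
  have haK : a ^ K ≠ 0 := pow_ne_zero K (ne_of_gt ha0)
  have hW : a • deltaFun K f x x' ψ a = f (x + a • v) - f x := key a ha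
  have hA1 : a * ⟪y, deltaFun K f x x' ψ a⟫ = ⟪y, f (x + a • v)⟫ - ⟪y, f x⟫ := by
    rw [← real_inner_smul_right, hW, inner_sub_right]
  have hmaph : ∀ k : ℕ, iteratedFDeriv ℝ k h (f x) (fun _ => f (x + a • v) - f x)
      = a ^ k * iteratedFDeriv ℝ k h (f x) (fun _ => deltaFun K f x x' ψ a) := by
    intro k
    rw [← hW]
    have := (iteratedFDeriv ℝ k h (f x)).map_smul_univ (fun _ : Fin k => a)
      (fun _ => deltaFun K f x x' ψ a)
    simpa [Finset.prod_const, smul_eq_mul] using this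
  have hA2 : ∑ k ∈ Finset.range (K + 1), ((k.factorial : ℝ))⁻¹ •
        iteratedFDeriv ℝ k h (f x) (fun _ => f (x + a • v) - f x)
      = h (f x) + ∑ k ∈ Finset.Icc 1 K, (a ^ k / (k.factorial : ℝ)) *
          iteratedFDeriv ℝ k h (f x) (fun _ => deltaFun K f x x' ψ a) := by
    rw [hins, Finset.sum_insert (by simp)]
    congr 1
    · simp [iteratedFDeriv_zero_apply]
    · apply Finset.sum_congr rfl
      intro k _
      rw [hmaph k, smul_eq_mul]
      ring
  have hA3 : a ^ K * ψh a = h (f (x + a • v)) - (∑ k ∈ Finset.range (K + 1),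
      ((k.factorial : ℝ))⁻¹ • iteratedFDeriv ℝ k h (f x)
        (fun _ => f (x + a • v) - f x)) := by
    rw [hψhdef]
    simp only [smul_eq_mul]
    rw [← mul_assoc, mul_inv_cancel₀ haK, one_mul]
  rw [hA2] at hA3
  linarith [hA1, hA3]
end
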